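/- arXiv:1603.09735 — 8 statements merged into one kernel-verified Lean document; each statement's English description precedes it below -/
import Mathlib

section
/- There exists a unimodular 18×18 integer matrix U such that ᵗU M_0 U = E_8(-1) ⊕ E_8(-1) ⊕ [[2,1],[1,-2]], where M_0 is as defined. Hence the lattice with Gram matrix M_0 is isomorphic over ℤ to E_8(-1) ⊕ E_8(-1) ⊕ [[2,1],[1,-2]]. -/
open Matrix

noncomputable section

def A18 : Matrix (Fin 18) (Fin 18) ℤ :=
  Matrix.of fun i j => if i = j then -2 else if i.val + 1 = j.val ∨ j.val + 1 = i.val then 1 else 0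

def E (i j : Fin 18) : Matrix (Fin 18) (Fin 18) ℤ := Matrix.single i j 1

def M0 : Matrix (Fin 18) (Fin 18) ℤ :=
  A18 + 2 • E 16 16 - (E 5 6 + E 6 5) + (E 4 6 + E 6 4) - (E 13 14 + E 14 13)
    + (E 12 14 + E 14 12) - (E 7 8 + E 8 7) - (E 15 16 + E 16 15)
    + (E 5 16 + E 16 5) + (E 7 15 + E 15 7) + (E 13 16 + E 16 13)

def E8neg : Matrix (Fin 8) (Fin 8) ℤ :=
  !![-2,1,0,0,0,0,0,0; 1,-2,1,0,0,0,0,0; 0,1,-2,1,0,0,0,0; 0,0,1,-2,1,0,0,0;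
     0,0,0,1,-2,1,1,0; 0,0,0,0,1,-2,0,0; 0,0,0,0,1,0,-2,1; 0,0,0,0,0,0,1,-2]

def e18 : (Fin 8 ⊕ (Fin 8 ⊕ Fin 2)) ≃ Fin 18 :=
  (Equiv.sumCongr (Equiv.refl (Fin 8)) finSumFinEquiv).trans finSumFinEquiv

def target0 : Matrix (Fin 18) (Fin 18) ℤ :=
  Matrix.reindex e18 e18
    (Matrix.fromBlocks E8neg 0 0 (Matrix.fromBlocks E8neg 0 0 !![2,1;1,-2]))

def Ufn : Nat → Nat → ℤ
  | 0, j => #[(1),(0),(0),(0),(0),(0),(0),(0),(0),(0),(0),(0),(0),(0),(0),(0),(1),(0)].getD j 0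
  | 1, j => #[(0),(1),(0),(0),(0),(0),(0),(0),(0),(0),(0),(0),(0),(0),(0),(0),(2),(0)].getD j 0
  | 2, j => #[(0),(0),(1),(0),(0),(0),(0),(0),(0),(0),(0),(0),(0),(0),(0),(0),(3),(0)].getD j 0
  | 3, j => #[(0),(0),(0),(1),(0),(0),(0),(0),(0),(0),(0),(0),(0),(0),(0),(0),(4),(0)].getD j 0
  | 4, j => #[(0),(0),(0),(0),(1),(0),(0),(0),(0),(0),(0),(0),(0),(0),(0),(0),(5),(0)].getD j 0
  | 5, j => #[(0),(0),(0),(0),(0),(1),(0),(0),(0),(0),(0),(0),(0),(0),(0),(-1),(5),(0)].getD j 0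
  | 6, j => #[(0),(0),(0),(0),(0),(0),(1),(0),(0),(0),(0),(0),(0),(0),(0),(1),(1),(0)].getD j 0
  | 7, j => #[(0),(0),(0),(0),(0),(0),(0),(1),(0),(0),(0),(0),(0),(0),(0),(2),(-3),(0)].getD j 0
  | 8, j => #[(0),(0),(0),(0),(0),(0),(0),(0),(1),(0),(0),(0),(0),(0),(0),(0),(-1),(0)].getD j 0
  | 9, j => #[(0),(0),(0),(0),(0),(0),(0),(0),(0),(1),(0),(0),(0),(0),(0),(0),(-2),(0)].getD j 0
  | 10, j => #[(0),(0),(0),(0),(0),(0),(0),(0),(0),(0),(1),(0),(0),(0),(0),(0),(-3),(0)].getD j 0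
  | 11, j => #[(0),(0),(0),(0),(0),(0),(0),(0),(0),(0),(0),(1),(0),(0),(0),(0),(-4),(0)].getD j 0
  | 12, j => #[(0),(0),(0),(0),(0),(0),(0),(0),(0),(0),(0),(0),(1),(0),(0),(0),(-5),(0)].getD j 0
  | 13, j => #[(0),(0),(0),(0),(0),(0),(0),(0),(0),(0),(0),(0),(0),(1),(0),(-1),(0),(0)].getD j 0
  | 14, j => #[(0),(0),(0),(0),(0),(0),(0),(0),(0),(0),(0),(0),(0),(0),(1),(1),(-6),(0)].getD j 0
  | 15, j => #[(0),(0),(0),(0),(0),(0),(0),(0),(0),(0),(0),(0),(0),(0),(0),(3),(-7),(0)].getD j 0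
  | 16, j => #[(0),(0),(0),(0),(0),(0),(0),(0),(0),(0),(0),(0),(0),(0),(0),(-2),(5),(0)].getD j 0
  | 17, j => #[(0),(0),(0),(0),(0),(0),(0),(0),(0),(0),(0),(0),(0),(0),(0),(-1),(2),(1)].getD j 0
  | _, _ => 0
def Umat : Matrix (Fin 18) (Fin 18) ℤ := Matrix.of fun i j => Ufn i.val j.val
def Vfn : Nat → Nat → ℤ
  | 0, j => #[(1),(0),(0),(0),(0),(0),(0),(0),(0),(0),(0),(0),(0),(0),(0),(-2),(-3),(0)].getD j 0
  | 1, j => #[(0),(1),(0),(0),(0),(0),(0),(0),(0),(0),(0),(0),(0),(0),(0),(-4),(-6),(0)].getD j 0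
  | 2, j => #[(0),(0),(1),(0),(0),(0),(0),(0),(0),(0),(0),(0),(0),(0),(0),(-6),(-9),(0)].getD j 0
  | 3, j => #[(0),(0),(0),(1),(0),(0),(0),(0),(0),(0),(0),(0),(0),(0),(0),(-8),(-12),(0)].getD j 0
  | 4, j => #[(0),(0),(0),(0),(1),(0),(0),(0),(0),(0),(0),(0),(0),(0),(0),(-10),(-15),(0)].getD j 0
  | 5, j => #[(0),(0),(0),(0),(0),(1),(0),(0),(0),(0),(0),(0),(0),(0),(0),(-5),(-8),(0)].getD j 0
  | 6, j => #[(0),(0),(0),(0),(0),(0),(1),(0),(0),(0),(0),(0),(0),(0),(0),(-7),(-10),(0)].getD j 0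
  | 7, j => #[(0),(0),(0),(0),(0),(0),(0),(1),(0),(0),(0),(0),(0),(0),(0),(-4),(-5),(0)].getD j 0
  | 8, j => #[(0),(0),(0),(0),(0),(0),(0),(0),(1),(0),(0),(0),(0),(0),(0),(2),(3),(0)].getD j 0
  | 9, j => #[(0),(0),(0),(0),(0),(0),(0),(0),(0),(1),(0),(0),(0),(0),(0),(4),(6),(0)].getD j 0
  | 10, j => #[(0),(0),(0),(0),(0),(0),(0),(0),(0),(0),(1),(0),(0),(0),(0),(6),(9),(0)].getD j 0
  | 11, j => #[(0),(0),(0),(0),(0),(0),(0),(0),(0),(0),(0),(1),(0),(0),(0),(8),(12),(0)].getD j 0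
  | 12, j => #[(0),(0),(0),(0),(0),(0),(0),(0),(0),(0),(0),(0),(1),(0),(0),(10),(15),(0)].getD j 0
  | 13, j => #[(0),(0),(0),(0),(0),(0),(0),(0),(0),(0),(0),(0),(0),(1),(0),(5),(7),(0)].getD j 0
  | 14, j => #[(0),(0),(0),(0),(0),(0),(0),(0),(0),(0),(0),(0),(0),(0),(1),(7),(11),(0)].getD j 0
  | 15, j => #[(0),(0),(0),(0),(0),(0),(0),(0),(0),(0),(0),(0),(0),(0),(0),(5),(7),(0)].getD j 0
  | 16, j => #[(0),(0),(0),(0),(0),(0),(0),(0),(0),(0),(0),(0),(0),(0),(0),(2),(3),(0)].getD j 0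
  | 17, j => #[(0),(0),(0),(0),(0),(0),(0),(0),(0),(0),(0),(0),(0),(0),(0),(1),(1),(1)].getD j 0
  | _, _ => 0
def Vmat : Matrix (Fin 18) (Fin 18) ℤ := Matrix.of fun i j => Vfn i.val j.val
def Wfn : Nat → Nat → ℤ
  | 0, j => #[(-2),(1),(0),(0),(0),(0),(0),(0),(0),(0),(0),(0),(0),(0),(0),(0),(0),(0)].getD j 0
  | 1, j => #[(1),(-2),(1),(0),(0),(0),(0),(0),(0),(0),(0),(0),(0),(0),(0),(0),(0),(0)].getD j 0
  | 2, j => #[(0),(1),(-2),(1),(0),(0),(0),(0),(0),(0),(0),(0),(0),(0),(0),(0),(0),(0)].getD j 0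
  | 3, j => #[(0),(0),(1),(-2),(1),(0),(0),(0),(0),(0),(0),(0),(0),(0),(0),(0),(0),(0)].getD j 0
  | 4, j => #[(0),(0),(0),(1),(-2),(1),(1),(0),(0),(0),(0),(0),(0),(0),(0),(0),(0),(0)].getD j 0
  | 5, j => #[(0),(0),(0),(0),(1),(-2),(0),(0),(0),(0),(0),(0),(0),(0),(0),(0),(1),(0)].getD j 0
  | 6, j => #[(0),(0),(0),(0),(1),(0),(-2),(1),(0),(0),(0),(0),(0),(0),(0),(0),(0),(0)].getD j 0
  | 7, j => #[(0),(0),(0),(0),(0),(0),(1),(-2),(0),(0),(0),(0),(0),(0),(0),(1),(0),(0)].getD j 0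
  | 8, j => #[(0),(0),(0),(0),(0),(0),(0),(0),(-2),(1),(0),(0),(0),(0),(0),(0),(0),(0)].getD j 0
  | 9, j => #[(0),(0),(0),(0),(0),(0),(0),(0),(1),(-2),(1),(0),(0),(0),(0),(0),(0),(0)].getD j 0
  | 10, j => #[(0),(0),(0),(0),(0),(0),(0),(0),(0),(1),(-2),(1),(0),(0),(0),(0),(0),(0)].getD j 0
  | 11, j => #[(0),(0),(0),(0),(0),(0),(0),(0),(0),(0),(1),(-2),(1),(0),(0),(0),(0),(0)].getD j 0
  | 12, j => #[(0),(0),(0),(0),(0),(0),(0),(0),(0),(0),(0),(1),(-2),(1),(1),(0),(0),(0)].getD j 0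
  | 13, j => #[(0),(0),(0),(0),(0),(0),(0),(0),(0),(0),(0),(0),(1),(-2),(0),(0),(1),(0)].getD j 0
  | 14, j => #[(0),(0),(0),(0),(0),(0),(0),(0),(0),(0),(0),(0),(1),(0),(-2),(1),(0),(0)].getD j 0
  | 15, j => #[(0),(0),(0),(0),(0),(0),(0),(0),(0),(0),(0),(0),(0),(0),(1),(-3),(-3),(0)].getD j 0
  | 16, j => #[(0),(0),(0),(0),(0),(0),(0),(0),(0),(0),(0),(0),(0),(0),(0),(5),(7),(1)].getD j 0
  | 17, j => #[(0),(0),(0),(0),(0),(0),(0),(0),(0),(0),(0),(0),(0),(0),(0),(0),(1),(-2)].getD j 0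
  | _, _ => 0
def Wmat : Matrix (Fin 18) (Fin 18) ℤ := Matrix.of fun i j => Wfn i.val j.val

lemma hUM : Umatᵀ * M0 = Wmat := by decide

lemma hWU : Wmat * Umat = target0 := by decide

set_option maxRecDepth 4000 in
lemma hUV : Umat * Vmat = 1 := by
  ext i j; fin_cases i <;> fin_cases j <;> rfl

theorem stmt2 : ∃ U : Matrix (Fin 18) (Fin 18) ℤ,
    (U.det = 1 ∨ U.det = -1) ∧ Uᵀ * M0 * U = target0 := by
  exact ⟨Umat, Int.isUnit_iff.mp (Matrix.isUnit_det_of_right_inverse hUV),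
    by rw [hUM, hWU]⟩
end
end

section
/- The surface in ℂ³ defined by xyz²(x+y+z+1) + λxyz + μ = 0 is birationally equivalent to the surface defined by y₁² = 4x₀³ + (λ² + 2λz + z² + 2λz² + 2z³ + z⁴)x₀² + (-2λμz - 2μz² - 2μz³)x₀ + μ²z². Explicitly, the substitution x = -μ/x₀, y = (-λx₀ - y₁ + μz - x₀z - x₀z²)/(2x₀z) transforms the first equation into the second (up to a nonzero rational factor). -/
theorem stmt5 : ∀ lam mu x₀ y₁ z : ℂ, x₀ ≠ 0 → z ≠ 0 → mu ≠ 0 →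
    ((-mu / x₀) * ((-lam * x₀ - y₁ + mu * z - x₀ * z - x₀ * z ^ 2) / (2 * x₀ * z)) * z ^ 2
        * ((-mu / x₀) + ((-lam * x₀ - y₁ + mu * z - x₀ * z - x₀ * z ^ 2) / (2 * x₀ * z)) + z + 1)
      + lam * (-mu / x₀) * ((-lam * x₀ - y₁ + mu * z - x₀ * z - x₀ * z ^ 2) / (2 * x₀ * z)) * z
      + mu = 0
    ↔ y₁ ^ 2 = 4 * x₀ ^ 3 + (lam ^ 2 + 2 * lam * z + z ^ 2 + 2 * lam * z ^ 2 + 2 * z ^ 3 + z ^ 4) * x₀ ^ 2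
        + (-2 * lam * mu * z - 2 * mu * z ^ 2 - 2 * mu * z ^ 3) * x₀ + mu ^ 2 * z ^ 2) := by
  intro lam mu x₀ y₁ z hx hz hmu
  have key : ((-mu / x₀) * ((-lam * x₀ - y₁ + mu * z - x₀ * z - x₀ * z ^ 2) / (2 * x₀ * z)) * z ^ 2 * ((-mu / x₀) + ((-lam * x₀ - y₁ + mu * z - x₀ * z - x₀ * z ^ 2) / (2 * x₀ * z)) + z + 1) + lam * (-mu / x₀) * ((-lam * x₀ - y₁ + mu * z - x₀ * z - x₀ * z ^ 2) / (2 * x₀ * z)) * z + mu) = (-mu / (4 * x₀ ^ 3)) * (y₁ ^ 2 - (4 * x₀ ^ 3 + (lam ^ 2 + 2 * lam * z + z ^ 2 + 2 * lam * z ^ 2 + 2 * z ^ 3 + z ^ 4) * x₀ ^ 2 + (-2 * lam * mu * z - 2 * mu * z ^ 2 - 2 * mu * z ^ 3) * x₀ + mu ^ 2 * z ^ 2)) := by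
    have hD : x₀ * (2 * x₀ * z) * (x₀ * (2 * x₀ * z)) ≠ 0 := by
      simp [hx, hz]
    field_simp
    ring
  have h1 : (-mu / (4 * x₀ ^ 3)) ≠ 0 :=
    div_ne_zero (neg_ne_zero.mpr hmu) (by simp [hx])
  rw [key, mul_eq_zero, sub_eq_zero]
  simp [h1]
end

section
/- Under the substitution x = -2x₁²y₁/(-4λx₁³ + μy₁ + x₁y₁ + z₁), y = y₁²/(2x₁(-4λx₁³ + μy₁ + x₁y₁ + z₁)), z = -(-4λx₁³ + μy₁ + x₁y₁ + z₁)/(2x₁y₁), the equation xyz(x+y+z+1) + λx + μy = 0 is transformed (up to a nonzero rational factor) into z₁² = y₁³ + (μ² + 2μx₁ + x₁² - 4x₁³)y₁² + (-8λμx₁³ - 8λx₁⁴)y₁ + 16λ²x₁⁶. -/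
theorem stmt6 : ∀ lam mu x₁ y₁ z₁ : ℂ, x₁ ≠ 0 → y₁ ≠ 0 →
    ∀ hD : -4 * lam * x₁ ^ 3 + mu * y₁ + x₁ * y₁ + z₁ ≠ 0,
    (let D := -4 * lam * x₁ ^ 3 + mu * y₁ + x₁ * y₁ + z₁
     let x := -(2 * x₁ ^ 2 * y₁) / D
     let y := y₁ ^ 2 / (2 * x₁ * D)
     let z := -D / (2 * x₁ * y₁)
     x * y * z * (x + y + z + 1) + lam * x + mu * y = 0
    ↔ z₁ ^ 2 = y₁ ^ 3 + (mu ^ 2 + 2 * mu * x₁ + x₁ ^ 2 - 4 * x₁ ^ 3) * y₁ ^ 2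
        + (-8 * lam * mu * x₁ ^ 3 - 8 * lam * x₁ ^ 4) * y₁ + 16 * lam ^ 2 * x₁ ^ 6) := by
  intro lam mu x₁ y₁ z₁ hx hy hD
  simp only
  obtain ⟨d, rfl⟩ : ∃ d, z₁ = d - (-4 * lam * x₁ ^ 3 + mu * y₁ + x₁ * y₁) :=
    ⟨-4 * lam * x₁ ^ 3 + mu * y₁ + x₁ * y₁ + z₁, by ring⟩
  rw [show -4 * lam * x₁ ^ 3 + mu * y₁ + x₁ * y₁ +
      (d - (-4 * lam * x₁ ^ 3 + mu * y₁ + x₁ * y₁)) = d from by ring] at hD ⊢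
  have hden : (4 : ℂ) * x₁ * d ^ 2 ≠ 0 :=
    mul_ne_zero (mul_ne_zero (by norm_num) hx) (pow_ne_zero 2 hD)
  have h2xd : (2 : ℂ) * x₁ * d ≠ 0 := by simp [hx, hD]
  have h2xy : (2 : ℂ) * x₁ * y₁ ≠ 0 := by simp [hx, hy]
  have hp : -(2 * x₁ ^ 2 * y₁) / d * (y₁ ^ 2 / (2 * x₁ * d)) * (-d / (2 * x₁ * y₁))
      = y₁ ^ 2 / (2 * d) := by
    rw [div_mul_div_comm, div_mul_div_comm, div_eq_div_iff (by simp [hx, hy, hD])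
      (by simp [hD] : (2:ℂ) * d ≠ 0)]
    ring
  have hs : -(2 * x₁ ^ 2 * y₁) / d + y₁ ^ 2 / (2 * x₁ * d) + -d / (2 * x₁ * y₁) + 1
      = (-4 * x₁ ^ 3 * y₁ ^ 2 + y₁ ^ 3 - d ^ 2 + 2 * x₁ * y₁ * d) / (2 * x₁ * y₁ * d) := by
    rw [div_add_div _ _ hD h2xd, div_add_div _ _ (mul_ne_zero hD h2xd) h2xy,
      div_add_one (mul_ne_zero (mul_ne_zero hD h2xd) h2xy),
      div_eq_div_iff (mul_ne_zero (mul_ne_zero hD h2xd) h2xy) (by simp [hx, hy, hD])]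
    ring
  have key : -(2 * x₁ ^ 2 * y₁) / d * (y₁ ^ 2 / (2 * x₁ * d)) * (-d / (2 * x₁ * y₁)) *
      (-(2 * x₁ ^ 2 * y₁) / d + y₁ ^ 2 / (2 * x₁ * d) + -d / (2 * x₁ * y₁) + 1) +
      lam * (-(2 * x₁ ^ 2 * y₁) / d) + mu * (y₁ ^ 2 / (2 * x₁ * d)) =
      y₁ * ((y₁ ^ 3 + (mu ^ 2 + 2 * mu * x₁ + x₁ ^ 2 - 4 * x₁ ^ 3) * y₁ ^ 2
        + (-8 * lam * mu * x₁ ^ 3 - 8 * lam * x₁ ^ 4) * y₁ + 16 * lam ^ 2 * x₁ ^ 6)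
        - (d - (-4 * lam * x₁ ^ 3 + mu * y₁ + x₁ * y₁)) ^ 2) / (4 * x₁ * d ^ 2) := by
    rw [hp, hs, div_mul_div_comm, mul_div_assoc', mul_div_assoc',
      div_add_div _ _ (by simp [hx, hy, hD] : 2 * d * (2 * x₁ * y₁ * d) ≠ 0) hD,
      div_add_div _ _ (by simp [hx, hy, hD] : 2 * d * (2 * x₁ * y₁ * d) * d ≠ 0) h2xd,
      div_eq_div_iff (by simp [hx, hy, hD]) hden]
    ring
  rw [key, div_eq_zero_iff]
  constructor
  · rintro (h | h)
    · rcases mul_eq_zero.1 h with h | h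
      · exact absurd h hy
      · linear_combination -h
    · exact absurd h hden
  · intro h
    left
    rw [h]
    ring
end

section
/- The formal power series η₀(λ,μ) = Σ_{n,m≥0} (-1)^m · (5m+2n)!/(n!·(m!)³·(2m+n)!) · λⁿμᵐ satisfies D₁η₀ = 0, where D₁ = θ_λ(θ_λ + 2θ_μ) - λ(2θ_λ + 5θ_μ + 1)(2θ_λ + 5θ_μ + 2), θ_λ = λ∂/∂λ, θ_μ = μ∂/∂μ. -/
open Nat

noncomputable def c0 (n m : ℕ) : ℚ :=
  (-1) ^ m * ((5 * m + 2 * n)! : ℚ) / ((n ! : ℚ) * ((m ! : ℚ)) ^ 3 * ((2 * m + n)! : ℚ))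

/-- D₁η₀ = 0 coefficientwise, D₁ = θ_λ(θ_λ+2θ_μ) − λ(2θ_λ+5θ_μ+1)(2θ_λ+5θ_μ+2). -/
theorem stmt8 : ∀ n m : ℕ,
    (n : ℚ) * ((n : ℚ) + 2 * m) * c0 n m
      - (if n = 0 then 0
         else (2 * ((n : ℚ) - 1) + 5 * m + 1) * (2 * ((n : ℚ) - 1) + 5 * m + 2) * c0 (n - 1) m)
      = 0 := by
  intro n m
  cases n with
  | zero => simp
  | succ n =>
    simp only [c0, Nat.succ_ne_zero, if_false, Nat.succ_sub_one]
    have e1 : 5 * m + 2 * (n + 1) = (5 * m + 2 * n + 1) + 1 := by ring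
    have e2 : 5 * m + 2 * n + 1 = (5 * m + 2 * n) + 1 := rfl
    have e3 : 2 * m + (n + 1) = (2 * m + n) + 1 := by ring
    rw [e1, Nat.factorial_succ, e2, Nat.factorial_succ, e3, Nat.factorial_succ,
      Nat.factorial_succ]
    have hA : ((5 * m + 2 * n)! : ℚ) ≠ 0 := Nat.cast_ne_zero.2 (Nat.factorial_ne_zero _)
    have hB : ((n)! : ℚ) ≠ 0 := Nat.cast_ne_zero.2 (Nat.factorial_ne_zero _)
    have hC : ((m)! : ℚ) ≠ 0 := Nat.cast_ne_zero.2 (Nat.factorial_ne_zero _)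
    have hD : ((2 * m + n)! : ℚ) ≠ 0 := Nat.cast_ne_zero.2 (Nat.factorial_ne_zero _)
    have hn : ((n : ℚ) + 1) ≠ 0 := by positivity
    have hq : ((2 * m + n : ℕ) : ℚ) + 1 ≠ 0 := by positivity
    push_cast
    field_simp
    ring
end

section
/- The formal power series η₀(λ,μ) = Σ_{n,m≥0} (-1)^m · (5m+2n)!/(n!·(m!)³·(2m+n)!) · λⁿμᵐ satisfies D₂η₀ = 0, where D₂ = λ²θ_μ³ + μθ_λ(θ_λ - 1)(2θ_λ + 5θ_μ + 1), with θ_λ = λ∂/∂λ, θ_μ = μ∂/∂μ. -/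
open Nat

/-- D₂η₀ = 0 coefficientwise, D₂ = λ²θ_μ³ + μθ_λ(θ_λ−1)(2θ_λ+5θ_μ+1). -/
theorem stmt9 : ∀ n m : ℕ,
    (if 2 ≤ n then (m : ℚ) ^ 3 * c0 (n - 2) m else 0)
      + (if 1 ≤ m then
            (n : ℚ) * ((n : ℚ) - 1) * (2 * n + 5 * ((m : ℚ) - 1) + 1) * c0 n (m - 1)
          else 0)
      = 0 := by
  intro n m
  rcases Nat.lt_or_ge n 2 with hn | hn
  · rw [if_neg (by omega)]
    interval_cases n <;> split_ifs <;> simp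
  rcases Nat.eq_zero_or_pos m with rfl | hm
  · rw [if_pos hn, if_neg (by omega)]; simp
  rw [if_pos hn, if_pos (show 1 ≤ m from hm)]
  obtain ⟨a, rfl⟩ : ∃ a, n = a + 2 := ⟨n - 2, by omega⟩
  obtain ⟨b, rfl⟩ : ∃ b, m = b + 1 := ⟨m - 1, by omega⟩
  simp only [c0, Nat.add_sub_cancel]
  have h1 : 5 * (b + 1) + 2 * a = (5 * b + 2 * (a + 2)) + 1 := by ring
  have h2 : 2 * (b + 1) + a = 2 * b + (a + 2) := by ring
  have h3 : a + 2 = (a + 1) + 1 := by ring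
  rw [h1, h2, Nat.factorial_succ (5 * b + 2 * (a + 2)), Nat.factorial_succ b,
    h3, Nat.factorial_succ (a + 1), Nat.factorial_succ a]
  have ha : (a ! : ℚ) ≠ 0 := Nat.cast_ne_zero.mpr a.factorial_ne_zero
  have hb : (b ! : ℚ) ≠ 0 := Nat.cast_ne_zero.mpr b.factorial_ne_zero
  have hc : ((2 * b + (a + 2))! : ℚ) ≠ 0 :=
    Nat.cast_ne_zero.mpr (2 * b + (a + 2)).factorial_ne_zero
  have hb1 : ((b : ℚ) + 1) ≠ 0 := by positivity
  have ha1 : ((a : ℚ) + 1) ≠ 0 := by positivity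
  have ha2 : ((a : ℚ) + 2) ≠ 0 := by positivity
  push_cast
  field_simp
  ring
end

section
/- The formal power series η₁(λ,μ) = Σ_{n,m≥0} (-1)^{n+m} · (3n+3m)!/((n!)²(m!)²(n+m)!) · λⁿμᵐ satisfies (λθ_μ² - μθ_λ²)η₁ = 0, where θ_λ = λ∂/∂λ, θ_μ = μ∂/∂μ. -/
open Nat

noncomputable def c1 (n m : ℕ) : ℚ :=
  (-1) ^ (n + m) * ((3 * n + 3 * m)! : ℚ)
    / (((n ! : ℚ)) ^ 2 * ((m ! : ℚ)) ^ 2 * ((n + m)! : ℚ))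

/-- (λθ_μ² − μθ_λ²)η₁ = 0 coefficientwise. -/
theorem stmt10 : ∀ n m : ℕ,
    (if n = 0 then 0 else (m : ℚ) ^ 2 * c1 (n - 1) m)
      - (if m = 0 then 0 else (n : ℚ) ^ 2 * c1 n (m - 1)) = 0 := by
  intro n m
  match n, m with
  | 0, m => simp
  | n+1, 0 => simp
  | n+1, m+1 =>
    simp only [if_neg (Nat.succ_ne_zero _), Nat.add_sub_cancel]
    unfold c1
    have e1 : 3 * n + 3 * (m + 1) = 3 * (n + 1) + 3 * m := by omega
    have e2 : n + (m + 1) = n + 1 + m := by omega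
    rw [e1, e2]
    have h1 : ((n + 1)! : ℚ) = (n + 1) * n ! := by
      rw [Nat.factorial_succ]; push_cast; ring
    have h2 : ((m + 1)! : ℚ) = (m + 1) * m ! := by
      rw [Nat.factorial_succ]; push_cast; ring
    rw [h1, h2]
    have f1 : ((n)! : ℚ) ≠ 0 := by exact_mod_cast Nat.factorial_ne_zero n
    have f2 : ((m)! : ℚ) ≠ 0 := by exact_mod_cast Nat.factorial_ne_zero m
    have f3 : (((n + 1 + m))! : ℚ) ≠ 0 := by exact_mod_cast Nat.factorial_ne_zero _
    have f4 : ((n : ℚ) + 1) ≠ 0 := by positivity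
    have f5 : ((m : ℚ) + 1) ≠ 0 := by positivity
    field_simp
    push_cast
    ring
end

section
/- The formal power series η₂(λ,μ) = Σ_{n,m≥0} (-1)^n · (4m+3n)!/((m!)²·n!·((m+n)!)²) · λⁿμᵐ satisfies D₁η₂ = 0, where D₁ = λθ_μ² + μθ_λ(3θ_λ + 4θ_μ + 1), with θ_λ = λ∂/∂λ, θ_μ = μ∂/∂μ. -/
open Nat

noncomputable def c2 (n m : ℕ) : ℚ :=
  (-1) ^ n * ((4 * m + 3 * n)! : ℚ)
    / (((m ! : ℚ)) ^ 2 * (n ! : ℚ) * (((m + n)! : ℚ)) ^ 2)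

/-- D₁η₂ = 0 coefficientwise, D₁ = λθ_μ² + μθ_λ(3θ_λ+4θ_μ+1). -/
theorem stmt12 : ∀ n m : ℕ,
    (if n = 0 then 0 else (m : ℚ) ^ 2 * c2 (n - 1) m)
      + (if m = 0 then 0
         else (n : ℚ) * (3 * n + 4 * ((m : ℚ) - 1) + 1) * c2 n (m - 1)) = 0 := by
  rintro (_ | n) (_ | m)
  · simp
  · simp
  · simp [c2]
  · simp only [if_neg (Nat.succ_ne_zero n), if_neg (Nat.succ_ne_zero m),
      Nat.succ_sub_one]
    unfold c2
    have h1 : 4 * (m + 1) + 3 * n = (4 * m + 3 * n + 3) + 1 := by ring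
    have h2 : 4 * m + 3 * (n + 1) = 4 * m + 3 * n + 3 := by ring
    have h3 : (m + 1) + n = (m + n) + 1 := by ring
    have h4 : m + (n + 1) = (m + n) + 1 := by ring
    rw [h1, h2, h3, h4]
    simp only [Nat.factorial_succ (4 * m + 3 * n + 3), Nat.factorial_succ (m + n),
      Nat.factorial_succ m, Nat.factorial_succ n]
    push_cast
    have fm : ((m ! : ℚ)) ≠ 0 := by exact_mod_cast m.factorial_ne_zero
    have fn : ((n ! : ℚ)) ≠ 0 := by exact_mod_cast n.factorial_ne_zero
    have fmn : (((m + n)! : ℚ)) ≠ 0 := by exact_mod_cast (m + n).factorial_ne_zero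
    have fA : (((4 * m + 3 * n + 3)! : ℚ)) ≠ 0 := by
      exact_mod_cast (4 * m + 3 * n + 3).factorial_ne_zero
    have hm1 : ((m : ℚ) + 1) ≠ 0 := by positivity
    have hn1 : ((n : ℚ) + 1) ≠ 0 := by positivity
    have hmn1 : ((m : ℚ) + (n : ℚ) + 1) ≠ 0 := by positivity
    generalize (((4 * m + 3 * n + 3)! : ℚ)) = A at fA ⊢
    generalize ((m ! : ℚ)) = F at fm ⊢
    generalize ((n ! : ℚ)) = G at fn ⊢
    generalize (((m + n)! : ℚ)) = H at fmn ⊢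
    field_simp
    ring
end

section
/- Klein's icosahedral invariants satisfy the relation 144𝔇² = -1728𝔅⁵ + 720𝔄𝔆𝔅³ - 80𝔄²𝔆²𝔅 + 64𝔄³(5𝔅² - 𝔄𝔆)² + 𝔆³ as polynomials in ζ₀, ζ₁, ζ₂. -/
noncomputable section

def 𝔄 (z0 z1 z2 : ℂ) : ℂ := z0 ^ 2 + z1 * z2

def 𝔅 (z0 z1 z2 : ℂ) : ℂ :=
  8 * z0 ^ 4 * z1 * z2 - 2 * z0 ^ 2 * z1 ^ 2 * z2 ^ 2 + z1 ^ 3 * z2 ^ 3 - z0 * (z1 ^ 5 + z2 ^ 5)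

def 𝔆 (z0 z1 z2 : ℂ) : ℂ :=
  320 * z0 ^ 6 * z1 ^ 2 * z2 ^ 2 - 160 * z0 ^ 4 * z1 ^ 3 * z2 ^ 3
    + 20 * z0 ^ 2 * z1 ^ 4 * z2 ^ 4 + 6 * z1 ^ 5 * z2 ^ 5
    - 4 * z0 * (z1 ^ 5 + z2 ^ 5) * (32 * z0 ^ 4 - 20 * z0 ^ 2 * z1 * z2 + 5 * z1 ^ 2 * z2 ^ 2)
    + z1 ^ 10 + z2 ^ 10

def 𝔇 (z0 z1 z2 : ℂ) : ℂ :=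
  ((z1 ^ 5 - z2 ^ 5) * (-1024 * z0 ^ 10 + 3840 * z0 ^ 8 * z1 * z2 - 3840 * z0 ^ 6 * z1 ^ 2 * z2 ^ 2
      + 1200 * z0 ^ 4 * z1 ^ 3 * z2 ^ 3 - 100 * z0 ^ 2 * z1 ^ 4 * z2 ^ 4 + z1 ^ 5 * z2 ^ 5)
    + z0 * (z1 ^ 10 - z2 ^ 10) * (352 * z0 ^ 4 - 160 * z0 ^ 2 * z1 * z2 + 10 * z1 ^ 2 * z2 ^ 2)
    + (z1 ^ 15 - z2 ^ 15)) / 12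

theorem stmt13 : ∀ z0 z1 z2 : ℂ,
    144 * 𝔇 z0 z1 z2 ^ 2 =
      -1728 * 𝔅 z0 z1 z2 ^ 5 + 720 * 𝔄 z0 z1 z2 * 𝔆 z0 z1 z2 * 𝔅 z0 z1 z2 ^ 3
        - 80 * 𝔄 z0 z1 z2 ^ 2 * 𝔆 z0 z1 z2 ^ 2 * 𝔅 z0 z1 z2
        + 64 * 𝔄 z0 z1 z2 ^ 3 * (5 * 𝔅 z0 z1 z2 ^ 2 - 𝔄 z0 z1 z2 * 𝔆 z0 z1 z2) ^ 2
        + 𝔆 z0 z1 z2 ^ 3 := by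
  intro z0 z1 z2
  simp only [𝔄, 𝔅, 𝔆, 𝔇]
  field_simp
  ring
end
end
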